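/- For sets A, K ⊆ ℝⁿ, the Hausdorff dimension of the sumset A + K is at most the Hausdorff dimension of A plus the upper box-counting (Minkowski) dimension of K. -/

import Mathlib

open Filter Metric Set ENNReal

/-- Smallest number of `ε`-balls needed to cover `s` (`⊤` if no finite cover exists). -/
noncomputable def coverNum {X : Type*} [PseudoMetricSpace X] (s : Set X) (ε : ℝ) : ℕ∞ :=
  sInf {m : ℕ∞ | ∃ t : Finset X, (t.card : ℕ∞) = m ∧ s ⊆ ⋃ x ∈ t, Metric.ball x ε}

/-- Upper box-counting (Minkowski) dimension. -/
noncomputable def upperBoxDim {X : Type*} [PseudoMetricSpace X] (s : Set X) : ℝ≥0∞ :=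
  Filter.limsup
    (fun ε : ℝ =>
      if coverNum s ε = ⊤ then (⊤ : ℝ≥0∞)
      else ENNReal.ofReal (Real.log ((coverNum s ε).toNat) / Real.log ε⁻¹))
    (nhdsWithin 0 (Set.Ioi 0))

open Topology MeasureTheory
open scoped NNReal

lemma coverNum_exists {X : Type*} [PseudoMetricSpace X] {s : Set X} {ε : ℝ}
    (h : coverNum s ε ≠ ⊤) :
    ∃ t : Finset X, (t.card : ℕ∞) = coverNum s ε ∧ s ⊆ ⋃ x ∈ t, Metric.ball x ε := by
  have h1 : coverNum s ε < coverNum s ε + 1 := (ENat.lt_add_one_iff h).mpr le_rfl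
  rw [coverNum, sInf_lt_iff] at h1
  obtain ⟨m, hm, hml⟩ := h1
  obtain ⟨t, htc, hts⟩ := hm
  subst htc
  exact ⟨t, le_antisymm ((ENat.lt_add_one_iff h).mp hml) (sInf_le ⟨t, rfl, hts⟩), hts⟩

lemma eventually_coverNum {X : Type*} [PseudoMetricSpace X] {K : Set X} (hK : K.Nonempty)
    {t : ℝ} (ht : 0 < t) (h : upperBoxDim K < ENNReal.ofReal t) :
    ∀ᶠ ε in 𝓝[>] (0:ℝ), ∃ T : Finset X,
      (K ⊆ ⋃ x ∈ T, Metric.ball x ε) ∧ (T.card : ℝ) ≤ ε ^ (-t) := by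
  have h1 := eventually_lt_of_limsup_lt h
  have h2 : Set.Ioo (0:ℝ) 1 ∈ 𝓝[>] (0:ℝ) :=
    Ioo_mem_nhdsGT_of_mem ⟨le_rfl, zero_lt_one⟩
  filter_upwards [h1, h2] with ε hε hε01
  obtain ⟨hε0, hε1⟩ := hε01
  by_cases hc : coverNum K ε = ⊤
  · rw [if_pos hc] at hε; exact absurd hε (not_lt.mpr le_top)
  rw [if_neg hc] at hε
  obtain ⟨T, hTc, hTs⟩ := coverNum_exists hc
  have hN : ((coverNum K ε).toNat : ℝ) = (T.card : ℝ) := by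
    rw [← hTc]; simp
  have hcard0 : 0 < T.card := by
    rcases Nat.eq_zero_or_pos T.card with h0 | h0
    · exfalso
      obtain ⟨k, hk⟩ := hK
      have := hTs hk
      simp only [Finset.card_eq_zero.mp h0] at this
      simpa using this
    · exact h0
  have hlog : Real.log ((coverNum K ε).toNat) / Real.log ε⁻¹ < t := by
    by_contra hcon
    push_neg at hcon
    exact absurd hε (not_lt.mpr (le_trans (ENNReal.ofReal_le_ofReal hcon) le_rfl))
  have hlinv : 0 < Real.log ε⁻¹ := Real.log_pos ((one_lt_inv₀ hε0).mpr hε1)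
  have hlogN : Real.log ((coverNum K ε).toNat) < t * Real.log ε⁻¹ :=
    (div_lt_iff₀ hlinv).mp hlog
  refine ⟨T, hTs, ?_⟩
  have h3 : (T.card : ℝ) = Real.exp (Real.log ((coverNum K ε).toNat)) := by
    rw [hN, Real.exp_log]
    exact_mod_cast hcard0
  rw [h3]
  calc Real.exp (Real.log ((coverNum K ε).toNat))
      ≤ Real.exp (t * Real.log ε⁻¹) := Real.exp_le_exp.mpr hlogN.le
    _ = ε⁻¹ ^ t := by
        rw [Real.rpow_def_of_pos (inv_pos.mpr hε0), mul_comm]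
    _ = ε ^ (-t) := by
        rw [Real.inv_rpow hε0.le, ← Real.rpow_neg hε0.le]

open scoped Pointwise in
lemma diam_sumset_le {E : Type*} [SeminormedAddCommGroup E] (S T : Set E) :
    EMetric.diam (S + T) ≤ EMetric.diam S + EMetric.diam T := by
  apply EMetric.diam_le
  rintro x ⟨a, ha, b, hb, rfl⟩ y ⟨c, hc, d, hd, rfl⟩
  calc edist (a + b) (c + d) ≤ edist a c + edist b d := edist_add_add_le a b c d
    _ ≤ _ := add_le_add (EMetric.edist_le_diam_of_mem ha hc)
        (EMetric.edist_le_diam_of_mem hb hd)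

open MeasureTheory.Measure in
open scoped Pointwise in
lemma core {X : Type*} [NormedAddCommGroup X] [MeasurableSpace X] [BorelSpace X]
    {A K : Set X} (hK : K.Nonempty) {s t : ℝ} (hs : 0 < s) (ht : 0 < t)
    (hA0 : μH[s] A = 0) (hdt : upperBoxDim K < ENNReal.ofReal t) {c : ℝ≥0} (hc : 0 < c) :
    μH[s + t] (A + K) ≤ c := by
  obtain ⟨ε₀, hε₀, hP⟩ : ∃ ε₀, 0 < ε₀ ∧ ∀ ε ∈ Ioo (0:ℝ) ε₀, ∃ T : Finset X,
      (K ⊆ ⋃ x ∈ T, Metric.ball x ε) ∧ (T.card : ℝ) ≤ ε ^ (-t) := by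
    have := (nhdsGT_basis (0:ℝ)).eventually_iff.mp (eventually_coverNum hK ht hdt)
    exact ⟨this.choose, this.choose_spec.1, fun ε hε => this.choose_spec.2 hε⟩
  rw [hausdorffMeasure_apply]
  refine iSup_le fun r => iSup_le fun hr => ?_
  obtain ⟨ρ, hρ0, hρr⟩ : ∃ ρ : ℝ, 0 < ρ ∧ ENNReal.ofReal ρ ≤ r := by
    rcases eq_or_ne r ⊤ with hrt | hrt
    · exact ⟨1, one_pos, by simp [hrt]⟩
    · exact ⟨r.toReal, ENNReal.toReal_pos hr.ne' hrt, by rw [ENNReal.ofReal_toReal hrt]⟩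
  set δ : ℝ := min (ρ/6) (ε₀/3) with hδdef
  have hδ0 : 0 < δ := lt_min (by positivity) (by positivity)
  set M : ℝ := 6 ^ (s + t) with hMdef
  have hM0 : 0 < M := Real.rpow_pos_of_pos (by norm_num) _
  set c' : ℝ := min (δ ^ s) ((c:ℝ) / (2*M)) with hc'def
  have hc'0 : 0 < c' := lt_min (Real.rpow_pos_of_pos hδ0 _) (by positivity)
  -- extract a cover of A
  have h1 : (⨅ (U : ℕ → Set X) (_ : A ⊆ ⋃ n, U n)
      (_ : ∀ n, EMetric.diam (U n) ≤ ENNReal.ofReal δ),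
      ∑' n, ⨆ _ : (U n).Nonempty, EMetric.diam (U n) ^ s) = 0 := by
    refine le_antisymm ?_ zero_le
    rw [← hA0, hausdorffMeasure_apply]
    exact le_iSup₂ (f := fun r' (_ : 0 < r') => ⨅ (U : ℕ → Set X) (_ : A ⊆ ⋃ n, U n)
      (_ : ∀ n, EMetric.diam (U n) ≤ r'),
      ∑' n, ⨆ _ : (U n).Nonempty, EMetric.diam (U n) ^ s)
      (ENNReal.ofReal δ) (ENNReal.ofReal_pos.mpr hδ0)
  have h2 : (⨅ (U : ℕ → Set X) (_ : A ⊆ ⋃ n, U n)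
      (_ : ∀ n, EMetric.diam (U n) ≤ ENNReal.ofReal δ),
      ∑' n, ⨆ _ : (U n).Nonempty, EMetric.diam (U n) ^ s) < ENNReal.ofReal c' := by
    rw [h1]; exact ENNReal.ofReal_pos.mpr hc'0
  simp only [iInf_lt_iff] at h2
  obtain ⟨U, hUA, hUd, hUs⟩ := h2
  set e : ℕ → ℝ := fun i => (EMetric.diam (U i)).toReal with hedef
  have hdiamU : ∀ i, EMetric.diam (U i) = ENNReal.ofReal (e i) := fun i =>
    (ENNReal.ofReal_toReal ((hUd i).trans_lt ENNReal.ofReal_lt_top).ne).symm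
  have he0 : ∀ i, 0 ≤ e i := fun i => ENNReal.toReal_nonneg
  have heδ : ∀ i, e i ≤ δ := fun i => ENNReal.toReal_le_of_le_ofReal hδ0.le (hUd i)
  set η : ℕ → ℝ := fun i => (c' * (1/2) ^ (i+1)) ^ (1/s) with hηdef
  have hη0 : ∀ i, 0 < η i := fun i => Real.rpow_pos_of_pos (by positivity) _
  have hηs : ∀ i, η i ^ s = c' * (1/2:ℝ) ^ (i+1) := fun i => by
    rw [hηdef]
    dsimp only
    rw [← Real.rpow_mul (by positivity), one_div_mul_cancel hs.ne', Real.rpow_one]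
  have hηδ : ∀ i, η i ≤ δ := fun i => by
    by_contra hcon
    push_neg at hcon
    have h3 : δ ^ s < η i ^ s := Real.rpow_lt_rpow hδ0.le hcon hs
    rw [hηs] at h3
    have h4 : c' * (1/2:ℝ)^(i+1) ≤ c' := by
      have : ((1:ℝ)/2)^(i+1) ≤ 1 :=
        pow_le_one₀ (by norm_num) (by norm_num)
      nlinarith [hc'0.le]
    have h5 : c' ≤ δ ^ s := min_le_left _ _
    linarith
  set d : ℕ → ℝ := fun i => e i + η i with hddef
  have hd0 : ∀ i, 0 < d i := fun i => add_pos_of_nonneg_of_pos (he0 i) (hη0 i)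
  have hed : ∀ i, e i ≤ d i := fun i => le_add_of_nonneg_right (hη0 i).le
  have hd2δ : ∀ i, d i ≤ 2 * δ := fun i => add_le_add (heδ i) (hηδ i) |>.trans_eq (by ring)
  have hdε₀ : ∀ i, d i < ε₀ := fun i => by
    have h6 : δ ≤ ε₀/3 := min_le_right _ _
    have := hd2δ i
    linarith
  choose T hTK hTcard using fun i => hP (d i) ⟨hd0 i, hdε₀ i⟩
  set V : ℕ × ℕ → Set X := fun p =>
    U p.1 + (((T p.1).toList[p.2]?).elim ∅ fun x => Metric.ball x (d p.1)) with hVdef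
  set Eqv : ℕ ≃ ℕ × ℕ := (Denumerable.eqv (ℕ × ℕ)).symm with hEdef
  have hcov : A + K ⊆ ⋃ k, V (Eqv k) := by
    rintro x ⟨a, ha, b, hb, rfl⟩
    obtain ⟨i, hi⟩ := mem_iUnion.mp (hUA ha)
    have hb' := hTK i hb
    simp only [mem_iUnion, exists_prop] at hb'
    obtain ⟨y, hyT, hyb⟩ := hb'
    have hyl : y ∈ (T i).toList := Finset.mem_toList.mpr hyT
    obtain ⟨j, hj⟩ := List.mem_iff_getElem?.mp hyl
    refine mem_iUnion.mpr ⟨Eqv.symm (i, j), ?_⟩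
    have hVe : V (Eqv (Eqv.symm (i,j))) = V (i,j) := by rw [Equiv.apply_symm_apply]
    rw [hVe, hVdef]
    dsimp only
    rw [hj, Option.elim]
    exact add_mem_add hi hyb
  -- diameter bound
  have hVdiam : ∀ p : ℕ × ℕ, EMetric.diam (V p) ≤ ENNReal.ofReal (3 * d p.1) := by
    rintro ⟨i, j⟩
    rw [hVdef]
    dsimp only
    match hm : (T i).toList[j]? with
    | none =>
      rw [Option.elim]
      rw [Set.add_empty]; exact le_of_eq_of_le EMetric.diam_empty zero_le
    | some y =>
      rw [Option.elim]
      refine (diam_sumset_le _ _).trans ?_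
      have hb : EMetric.diam (Metric.ball y (d i)) ≤ ENNReal.ofReal (2 * d i) := by
        rw [← Metric.emetric_ball]
        refine EMetric.diam_ball.trans ?_
        rw [ENNReal.ofReal_mul (by norm_num : (0:ℝ) ≤ 2)]
        norm_num
      calc EMetric.diam (U i) + EMetric.diam (Metric.ball y (d i))
          ≤ ENNReal.ofReal (e i) + ENNReal.ofReal (2 * d i) :=
            add_le_add (hdiamU i).le hb
        _ = ENNReal.ofReal (e i + 2 * d i) :=
            (ENNReal.ofReal_add (he0 i) (by positivity)).symm
        _ ≤ ENNReal.ofReal (3 * d i) :=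
            ENNReal.ofReal_le_ofReal (by have := hed i; linarith)
  have hWdiam : ∀ k, EMetric.diam (V (Eqv k)) ≤ r := fun k => by
    refine (hVdiam _).trans (le_trans (ENNReal.ofReal_le_ofReal ?_) hρr)
    have h6 : δ ≤ ρ/6 := min_le_left _ _
    have := hd2δ (Eqv k).1
    linarith
  refine iInf_le_of_le (fun k => V (Eqv k)) (iInf_le_of_le hcov (iInf_le_of_le hWdiam ?_))
  -- the sum bound
  have hsum1 : (∑' k, ⨆ _ : (V (Eqv k)).Nonempty, EMetric.diam (V (Eqv k)) ^ (s+t))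
      = ∑' p : ℕ × ℕ, ⨆ _ : (V p).Nonempty, EMetric.diam (V p) ^ (s+t) :=
    Eqv.tsum_eq (fun p => ⨆ _ : (V p).Nonempty, EMetric.diam (V p) ^ (s+t))
  refine (le_of_eq hsum1).trans ?_; rw [ENNReal.tsum_prod']
  have hreal : ∀ i, (d i)^(-t) * (3 * d i)^(s+t) ≤ M * (e i ^ s + η i ^ s) := by
    intro i
    have h3 : (3 * d i)^(s+t) = 3^(s+t) * (d i)^(s+t) :=
      Real.mul_rpow (by norm_num) (hd0 i).le
    have h4 : (d i)^(-t) * (d i)^(s+t) = (d i)^s := by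
      rw [← Real.rpow_add (hd0 i)]
      ring_nf
    have h5 : (d i)^s ≤ 2^s * (e i ^ s + η i ^ s) := by
      have hmax : d i ≤ 2 * max (e i) (η i) := by
        rcases le_total (e i) (η i) with h | h
        · rw [max_eq_right h]; simp only [hddef]; linarith
        · rw [max_eq_left h]; simp only [hddef]; linarith
      have hmax0 : 0 ≤ max (e i) (η i) := le_max_of_le_left (he0 i)
      calc (d i)^s ≤ (2 * max (e i) (η i))^s :=
            Real.rpow_le_rpow (hd0 i).le hmax hs.le
        _ = 2^s * max (e i) (η i) ^ s := Real.mul_rpow (by norm_num) hmax0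
        _ ≤ 2^s * (e i ^ s + η i ^ s) := by
            have h2s : (0:ℝ) ≤ 2^s := (Real.rpow_pos_of_pos two_pos s).le
            have : max (e i) (η i) ^ s ≤ e i ^ s + η i ^ s := by
              rcases max_cases (e i) (η i) with ⟨hm, _⟩ | ⟨hm, _⟩ <;> rw [hm]
              · nlinarith [Real.rpow_nonneg (hη0 i).le s]
              · nlinarith [Real.rpow_nonneg (he0 i) s]
            nlinarith
    have h6 : 3^(s+t) * 2^s ≤ M := by
      rw [hMdef]
      calc (3:ℝ)^(s+t) * 2^s ≤ 3^(s+t) * 2^(s+t) := by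
            have : (2:ℝ)^s ≤ 2^(s+t) :=
              Real.rpow_le_rpow_of_exponent_le (by norm_num) (by linarith)
            nlinarith [Real.rpow_pos_of_pos (by norm_num : (0:ℝ) < 3) (s+t)]
        _ = 6^(s+t) := by
            rw [← Real.mul_rpow (by norm_num) (by norm_num)]
            norm_num
    have h7 : (0:ℝ) < 3^(s+t) := Real.rpow_pos_of_pos (by norm_num) _
    have h8 : (0:ℝ) ≤ e i ^ s + η i ^ s := by
      positivity
    calc (d i)^(-t) * (3 * d i)^(s+t) = 3^(s+t) * (d i)^s := by
          rw [h3, ← h4]; ring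
      _ ≤ 3^(s+t) * (2^s * (e i ^ s + η i ^ s)) := by nlinarith
      _ = (3^(s+t) * 2^s) * (e i ^ s + η i ^ s) := by ring
      _ ≤ M * (e i ^ s + η i ^ s) := by nlinarith
  have hinner : ∀ i, (∑' j, ⨆ _ : (V (i,j)).Nonempty, EMetric.diam (V (i,j)) ^ (s+t))
      ≤ ENNReal.ofReal M * (ENNReal.ofReal (e i ^ s) + ENNReal.ofReal (η i ^ s)) := by
    intro i
    set L := (T i).toList.length with hLdef
    have hz : ∀ j ∉ Finset.range L, (⨆ _ : (V (i,j)).Nonempty, EMetric.diam (V (i,j)) ^ (s+t)) = 0 := by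
      intro j hj
      rw [Finset.mem_range, not_lt] at hj
      have hnone : (T i).toList[j]? = none := List.getElem?_eq_none hj
      have hVempty : V (i, j) = ∅ := by
        rw [hVdef]
        dsimp only
        rw [hnone, Option.elim, Set.add_empty]
      rw [iSup_neg (by rw [hVempty]; exact not_nonempty_empty)]
      rfl
    rw [tsum_eq_sum hz]
    have hterm : ∀ j ∈ Finset.range L,
        (⨆ _ : (V (i,j)).Nonempty, EMetric.diam (V (i,j)) ^ (s+t))
          ≤ ENNReal.ofReal ((3 * d i) ^ (s+t)) := by
      intro j _
      refine iSup_le fun _ => ?_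
      rw [← ENNReal.ofReal_rpow_of_pos (by positivity)]
      exact ENNReal.rpow_le_rpow (hVdiam (i,j)) (by positivity)
    calc (∑ j ∈ Finset.range L, ⨆ _ : (V (i,j)).Nonempty, EMetric.diam (V (i,j)) ^ (s+t))
        ≤ (Finset.range L).card • ENNReal.ofReal ((3 * d i) ^ (s+t)) :=
          Finset.sum_le_card_nsmul _ _ _ hterm
      _ = (L : ℝ≥0∞) * ENNReal.ofReal ((3 * d i) ^ (s+t)) := by
          rw [Finset.card_range, nsmul_eq_mul]
      _ ≤ ENNReal.ofReal ((d i) ^ (-t)) * ENNReal.ofReal ((3 * d i) ^ (s+t)) := by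
          gcongr
          rw [← ENNReal.ofReal_natCast]
          refine ENNReal.ofReal_le_ofReal ?_
          rw [hLdef, Finset.length_toList]
          exact hTcard i
      _ = ENNReal.ofReal ((d i) ^ (-t) * (3 * d i) ^ (s+t)) :=
          (ENNReal.ofReal_mul (by positivity)).symm
      _ ≤ ENNReal.ofReal (M * (e i ^ s + η i ^ s)) :=
          ENNReal.ofReal_le_ofReal (hreal i)
      _ = ENNReal.ofReal M * (ENNReal.ofReal (e i ^ s) + ENNReal.ofReal (η i ^ s)) := by
          rw [ENNReal.ofReal_mul hM0.le,
            ENNReal.ofReal_add (by positivity) (by positivity)]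
  have hsumE : (∑' i, ENNReal.ofReal (e i ^ s)) ≤ ENNReal.ofReal c' := by
    refine le_trans (ENNReal.tsum_le_tsum fun i => ?_) hUs.le
    rcases eq_empty_or_nonempty (U i) with hUe | hUe
    · have he' : e i = 0 := by
        simp only [hedef, hUe]; exact (congrArg ENNReal.toReal EMetric.diam_empty).trans ENNReal.toReal_zero
      rw [he', Real.zero_rpow hs.ne', ENNReal.ofReal_zero]
      exact zero_le
    · rw [iSup_pos hUe, hdiamU i, ENNReal.ofReal_rpow_of_nonneg (he0 i) hs.le]
  have hsumη : (∑' i, ENNReal.ofReal (η i ^ s)) ≤ ENNReal.ofReal c' := by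
    have hq : ENNReal.ofReal (1/2 : ℝ) = 2⁻¹ := by
      rw [one_div, ENNReal.ofReal_inv_of_pos two_pos, ENNReal.ofReal_ofNat]
    have hrw : ∀ i : ℕ, ENNReal.ofReal (η i ^ s)
        = ENNReal.ofReal c' * (2⁻¹ : ℝ≥0∞) ^ (i+1) := by
      intro i
      rw [hηs i, ENNReal.ofReal_mul hc'0.le, ENNReal.ofReal_pow (by norm_num), hq]
    simp only [hrw]
    rw [ENNReal.tsum_mul_left, ENNReal.tsum_geometric_add_one]
    have hgeo : (2⁻¹ : ℝ≥0∞) * (1 - 2⁻¹)⁻¹ = 1 := by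
      rw [ENNReal.one_sub_inv_two, inv_inv, ENNReal.inv_mul_cancel two_ne_zero ENNReal.ofNat_ne_top]
    rw [hgeo, mul_one]
  calc (∑' i, ∑' j, ⨆ _ : (V (i,j)).Nonempty, EMetric.diam (V (i,j)) ^ (s+t))
      ≤ ∑' i, ENNReal.ofReal M * (ENNReal.ofReal (e i ^ s) + ENNReal.ofReal (η i ^ s)) :=
        ENNReal.tsum_le_tsum hinner
    _ = ENNReal.ofReal M * ((∑' i, ENNReal.ofReal (e i ^ s)) + ∑' i, ENNReal.ofReal (η i ^ s)) := by
        rw [ENNReal.tsum_mul_left, ENNReal.tsum_add]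
    _ ≤ ENNReal.ofReal M * (ENNReal.ofReal c' + ENNReal.ofReal c') := by
        gcongr
    _ = ENNReal.ofReal (M * (c' + c')) := by
        rw [← ENNReal.ofReal_add hc'0.le hc'0.le, ← ENNReal.ofReal_mul hM0.le]
    _ ≤ ENNReal.ofReal (c : ℝ) := by
        refine ENNReal.ofReal_le_ofReal ?_
        have h9 : c' ≤ (c:ℝ)/(2*M) := min_le_right _ _
        have h10 : (0:ℝ) < 2*M := by positivity
        have h11 := (le_div_iff₀ h10).mp h9
        nlinarith
    _ = (c : ℝ≥0∞) := ENNReal.ofReal_coe_nnreal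


open scoped Pointwise in
theorem dimH_sumset_le (n : ℕ) (A K : Set (EuclideanSpace ℝ (Fin n))) :
    dimH (A + K) ≤ dimH A + upperBoxDim K := by
  rcases Set.eq_empty_or_nonempty A with hAe | hAn
  · rw [hAe, Set.empty_add, dimH_empty]; exact zero_le
  rcases Set.eq_empty_or_nonempty K with hKe | hKn
  · rw [hKe, Set.add_empty, dimH_empty]; exact zero_le
  refine ENNReal.le_of_forall_pos_le_add fun ε hε hlt => ?_
  have hAfin : dimH A ≠ ⊤ := ne_top_of_le_ne_top hlt.ne le_self_add
  have hBfin : upperBoxDim K ≠ ⊤ := ne_top_of_le_ne_top hlt.ne le_add_self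
  have hε2 : (ε:ℝ≥0∞)/2 ≠ 0 := by
    simp [ENNReal.div_eq_zero_iff, hε.ne']
  obtain ⟨s, hs1, hs2⟩ := ENNReal.lt_iff_exists_nnreal_btwn.mp (ENNReal.lt_add_right hAfin hε2)
  obtain ⟨t, ht1, ht2⟩ := ENNReal.lt_iff_exists_nnreal_btwn.mp (ENNReal.lt_add_right hBfin hε2)
  have hs0 : (0:ℝ) < s := by
    have h0 : (0:ℝ≥0∞) < (s:ℝ≥0∞) := lt_of_le_of_lt zero_le hs1
    exact_mod_cast h0
  have ht0 : (0:ℝ) < t := by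
    have h0 : (0:ℝ≥0∞) < (t:ℝ≥0∞) := lt_of_le_of_lt zero_le ht1
    exact_mod_cast h0
  have hμA : μH[(s:ℝ)] A = 0 := hausdorffMeasure_of_dimH_lt hs1
  have hboxt : upperBoxDim K < ENNReal.ofReal (t:ℝ) := by
    rwa [ENNReal.ofReal_coe_nnreal]
  have hdim : dimH (A + K) ≤ ((s + t : ℝ≥0) : ℝ≥0∞) := by
    refine dimH_le_of_hausdorffMeasure_ne_top ?_
    have h0 : μH[((s+t : ℝ≥0):ℝ)] (A + K) = 0 := by
      rw [← nonpos_iff_eq_zero]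
      have hco : ((s+t:ℝ≥0):ℝ) = (s:ℝ)+(t:ℝ) := by push_cast; ring
      rw [hco]
      refine ENNReal.le_of_forall_pos_le_add fun c hc _ => ?_
      rw [zero_add]
      exact core hKn hs0 ht0 hμA hboxt hc
    rw [h0]
    exact ENNReal.zero_ne_top
  refine hdim.trans ?_
  rw [ENNReal.coe_add]
  calc (s:ℝ≥0∞) + t ≤ (dimH A + ε/2) + (upperBoxDim K + ε/2) := add_le_add hs2.le ht2.le
    _ = dimH A + upperBoxDim K + ε := by rw [add_add_add_comm, ENNReal.add_halves]
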